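/- Let C ⊆ F_q^n (n = (q^k-1)/(q-1)) be a maximal q^{k-1}-equidistant code, i.e., a q-ary simplex code of dimension k. Then for any vector c ∈ F_q^n \ C, the subspace ⟨c⟩ + C contains a nonzero vector whose Hamming weight is not q^{k-1}. -/

import Mathlib

set_option synthInstance.maxHeartbeats 1000000
set_option maxHeartbeats 1000000

open Module Submodule

/-- A `q`-ary simplex code of dimension `k`: a `k`-dimensional subspace of `F^n`
whose coordinate functional restrictions are nonzero and pairwise non-proportional. -/
def IsSimplexCode {F : Type*} [Field F] {n : ℕ} (k : ℕ)
    (C : Submodule F (Fin n → F)) : Prop :=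
  Module.finrank F ↥C = k ∧
  (∀ i : Fin n, ∃ c ∈ C, c i ≠ 0) ∧
  (∀ i j : Fin n, i ≠ j → ∀ a : F, ∃ c ∈ C, c j ≠ a * c i)
theorem simplex_maximal_equidistant {F : Type*} [Field F] [Fintype F] [DecidableEq F]
    {q n k : ℕ} (hq : Fintype.card F = q) (hk : 2 ≤ k)
    (hn : n * (q - 1) = q ^ k - 1)
    (C : Submodule F (Fin n → F)) (hC : IsSimplexCode k C)
    (c : Fin n → F) (hc : c ∉ C) :
    ∃ v ∈ Submodule.span F {c} ⊔ C, v ≠ 0 ∧ hammingNorm v ≠ q ^ (k - 1) := by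
  classical
  by_contra hcon
  push_neg at hcon
  set D : Submodule F (Fin n → F) := Submodule.span F {c} ⊔ C with hD
  have hq2 : 2 ≤ q := by rw [← hq]; exact Fintype.one_lt_card
  have hc0 : c ≠ 0 := fun h => hc (h ▸ C.zero_mem)
  have hinf : Submodule.span F {c} ⊓ C = ⊥ := by
    rw [eq_bot_iff]
    rintro x ⟨hx1, hx2⟩
    obtain ⟨a, rfl⟩ := Submodule.mem_span_singleton.mp hx1
    rcases eq_or_ne a 0 with rfl | ha
    · simp
    · exact absurd (by simpa [smul_smul, inv_mul_cancel₀ ha] using C.smul_mem a⁻¹ hx2) hc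
  have hfr : finrank F D = k + 1 := by
    have h1 := Submodule.finrank_sup_add_finrank_inf_eq (Submodule.span F {c}) C
    rw [hinf, finrank_bot, finrank_span_singleton hc0, hC.1, ← hD] at h1
    omega
  have hcardD : Fintype.card D = q ^ (k + 1) := by
    rw [card_eq_pow_finrank (K := F), hq, hfr]
  -- first count: all nonzero vectors have weight q^(k-1)
  have hSum1 : ∑ v : D, hammingNorm (v : Fin n → F) = (q ^ (k + 1) - 1) * q ^ (k - 1) := by
    rw [← Finset.sum_erase_add _ _ (Finset.mem_univ (0 : D))]
    have h0 : hammingNorm ((0 : D) : Fin n → F) = 0 := by simp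
    rw [h0, add_zero]
    rw [Finset.sum_congr rfl (fun v hv => ?_), Finset.sum_const, smul_eq_mul,
      Finset.card_erase_of_mem (Finset.mem_univ _), Finset.card_univ, hcardD, mul_comm]
    have hv0 : v ≠ 0 := Finset.ne_of_mem_erase hv
    exact hcon (v : Fin n → F) v.2 (by simpa using hv0)
  -- second count: sum over coordinates
  have hSum2 : ∑ v : D, hammingNorm (v : Fin n → F)
      = ∑ i : Fin n, (Finset.univ.filter fun v : D => (v : Fin n → F) i ≠ 0).card := by
    simp only [hammingNorm, Finset.card_filter]
    exact Finset.sum_comm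
  have hdvd : q ^ k * (q - 1) ∣ ∑ v : D, hammingNorm (v : Fin n → F) := by
    rw [hSum2]
    refine Finset.dvd_sum fun i _ => ?_
    set φ : D →ₗ[F] F := (LinearMap.proj i).comp D.subtype with hφ
    have hφv : ∀ v : D, φ v = (v : Fin n → F) i := fun v => rfl
    rcases eq_or_ne φ 0 with h0 | h0
    · have : (Finset.univ.filter fun v : D => (v : Fin n → F) i ≠ 0) = ∅ := by
        refine Finset.filter_eq_empty_iff.mpr fun v _ => ?_
        simp [← hφv, h0]
      simp [this]
    · -- φ surjective, kernel has card q^k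
      have hrange : LinearMap.range φ = ⊤ := by
        rw [LinearMap.range_eq_top]
        obtain ⟨x, hx⟩ : ∃ x, φ x ≠ 0 := by
          by_contra hcontra
          push_neg at hcontra
          exact h0 (LinearMap.ext hcontra)
        intro a
        exact ⟨(a * (φ x)⁻¹) • x, by rw [map_smul, smul_eq_mul, mul_assoc,
          inv_mul_cancel₀ hx, mul_one]⟩
      have hker : finrank F (LinearMap.ker φ) = k := by
        have h1 := LinearMap.finrank_range_add_finrank_ker φ
        rw [hrange, finrank_top, hfr] at h1
        have : finrank F F = 1 := finrank_self F
        omega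
      have hcardker : Fintype.card (LinearMap.ker φ) = q ^ k := by
        rw [card_eq_pow_finrank (K := F), hq, hker]
      have hcardker' : (Finset.univ.filter fun v : D => (v : Fin n → F) i = 0).card
          = q ^ k := by
        rw [← hcardker, Fintype.card_subtype]
        congr 1
        ext v
        simp [LinearMap.mem_ker, ← hφv]
      have hsplit := Finset.card_filter_add_card_filter_not
        (s := (Finset.univ : Finset D)) (p := fun v : D => (v : Fin n → F) i = 0)
      rw [Finset.card_univ, hcardD, hcardker'] at hsplit
      have hcard' : (Finset.univ.filter fun v : D => (v : Fin n → F) i ≠ 0).card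
          = q ^ k * (q - 1) := by
        have hpow : q ^ (k + 1) = q ^ k * q := pow_succ q k
        have : (Finset.univ.filter fun v : D => ¬ (v : Fin n → F) i = 0).card
            = q ^ (k+1) - q ^ k := by omega
        simp only [ne_eq]
        rw [this, hpow, Nat.mul_sub_left_distrib, mul_one]
      exact hcard' ▸ dvd_refl _
  rw [hSum1] at hdvd
  -- derive the contradiction
  have hk1 : q ^ k = q ^ (k - 1) * q := by
    conv_lhs => rw [show k = (k - 1) + 1 by omega]
    exact pow_succ q (k - 1)
  have hqpos : 0 < q ^ (k - 1) := Nat.pow_pos (by omega)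
  have hdvd2 : q * (q - 1) ∣ q ^ (k + 1) - 1 := by
    have : q ^ (k-1) * (q * (q - 1)) ∣ q ^ (k-1) * (q ^ (k + 1) - 1) := by
      calc q ^ (k-1) * (q * (q-1)) = q ^ k * (q - 1) := by rw [hk1]; ring
      _ ∣ (q ^ (k + 1) - 1) * q ^ (k - 1) := hdvd
      _ = q ^ (k-1) * (q ^ (k + 1) - 1) := by ring
    exact (Nat.mul_dvd_mul_iff_left hqpos).mp this
  have hdvd3 : q ∣ q ^ (k + 1) - 1 := dvd_trans (Dvd.intro _ rfl) hdvd2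
  have hdvd4 : q ∣ q ^ (k + 1) := dvd_pow_self q (by omega)
  have h1 : q ∣ 1 := by
    have := Nat.dvd_sub hdvd4 hdvd3
    have hpos : 1 ≤ q ^ (k + 1) := Nat.one_le_pow _ _ (by omega)
    rwa [Nat.sub_sub_self hpos] at this
  exact absurd (Nat.le_of_dvd one_pos h1) (by omega)
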